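/- Let 0 < α0 < 2, α1 > α0, and set β = α1/(α0(1 - α0/2)); then β > 1. Let ε ∈ (0,1) and D > 0 satisfy e^{-α1 D} < ε, and define T* = (1/α1)·log((ε + β(1 - e^{-α1 D}) - 1)/(ε - e^{-α1 D})). Then the argument of the logarithm is strictly greater than 1 (so T* > 0), and (β - 1)(1 - e^{-α1 D})/(1 - e^{-α1 T*}) + 1 - β(1 - e^{-α1 D}) = ε. -/

import Mathlib

/-- Feasibility of the online risky policy for `D ≤ D̄` (Theorem 5, analytic core). With
`0 < α0 < 2`, `α1 > α0`, `β = α1 / (α0 * (1 - α0/2))`, `ε ∈ (0,1)`, `D > 0` with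
`exp (-α1 * D) < ε`, and
`T* = (1/α1) * log ((ε + β * (1 - exp (-α1 * D)) - 1) / (ε - exp (-α1 * D)))`:
`β > 1`, the argument of the logarithm is `> 1` (so `T* > 0`), and
`(β - 1) * (1 - exp (-α1 * D)) / (1 - exp (-α1 * T*)) + 1 - β * (1 - exp (-α1 * D)) = ε`. -/
theorem risky_policy_threshold_feasibility (α0 α1 ε D : ℝ)
    (hα0_pos : 0 < α0) (hα0_lt : α0 < 2) (hα01 : α0 < α1)
    (hε0 : 0 < ε) (hε1 : ε < 1) (hD : 0 < D) (hfeas : Real.exp (-α1 * D) < ε) :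
    1 < α1 / (α0 * (1 - α0 / 2)) ∧
    1 < (ε + (α1 / (α0 * (1 - α0 / 2))) * (1 - Real.exp (-α1 * D)) - 1)
          / (ε - Real.exp (-α1 * D)) ∧
    ((α1 / (α0 * (1 - α0 / 2))) - 1) * (1 - Real.exp (-α1 * D))
          / (1 - Real.exp (-α1 * ((1 / α1) * Real.log
              ((ε + (α1 / (α0 * (1 - α0 / 2))) * (1 - Real.exp (-α1 * D)) - 1)
                / (ε - Real.exp (-α1 * D))))))
        + 1 - (α1 / (α0 * (1 - α0 / 2))) * (1 - Real.exp (-α1 * D)) = ε := by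
  have hα1 : 0 < α1 := hα0_pos.trans hα01
  set b : ℝ := α1 / (α0 * (1 - α0 / 2)) with hb
  set e : ℝ := Real.exp (-α1 * D) with he
  have he0 : 0 < e := Real.exp_pos _
  have he1 : e < 1 := by
    rw [he, Real.exp_lt_one_iff]; nlinarith
  have hpos : 0 < α0 * (1 - α0 / 2) := by nlinarith
  have hb1 : 1 < b := by
    rw [hb, lt_div_iff₀ hpos]; nlinarith
  have hden : 0 < ε - e := sub_pos.2 hfeas
  set N : ℝ := ε + b * (1 - e) - 1 with hN
  have hNgt : ε - e < N := by
    have : (b - 1) * (1 - e) > 0 := by nlinarith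
    nlinarith
  have hNpos : 0 < N := hden.trans hNgt
  have hR1 : 1 < N / (ε - e) := (one_lt_div hden).2 (by linarith)
  refine ⟨hb1, hR1, ?_⟩
  have hα1ne : α1 ≠ 0 := ne_of_gt hα1
  have harg : -α1 * ((1 / α1) * Real.log (N / (ε - e))) = -Real.log (N / (ε - e)) := by
    field_simp
  rw [harg, Real.exp_neg, Real.exp_log (by positivity)]
  have h1 : 1 - (N / (ε - e))⁻¹ = (b - 1) * (1 - e) / N := by
    rw [inv_div]
    field_simp
    ring
  rw [h1]
  have hbe : (b - 1) * (1 - e) ≠ 0 := ne_of_gt (by nlinarith)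
  rw [div_div_eq_mul_div, mul_comm, mul_div_assoc, div_self hbe, mul_one, hN]
  ring
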